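/- Let n be a nonnegative integer and let θ₁, …, θ_k be real angles all contained in a closed interval [ϑ − π/2, ϑ + π/2] of length π centered at some angle ϑ. Define p_m = Σ_{j=1}^k e^{i m θ_j}. Then |p_{2n+1}| ≤ (2n+1) · |p₁|. -/

import Mathlib

open Real

lemma exp_cos_aux (v w : ℂ) :
    Complex.exp (v + w * Complex.I) =
      2 * Complex.cos w * Complex.exp v - Complex.exp (v - w * Complex.I) := by
  rw [Complex.cos, show v + w * Complex.I = w * Complex.I + v by ring,
    show v - w * Complex.I = -(w * Complex.I) + v by ring, Complex.exp_add, Complex.exp_add]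
  ring

lemma cos_sum_le (k : ℕ) (ϑ : ℝ) (θ : Fin k → ℝ) :
    ∑ j : Fin k, Real.cos (θ j - ϑ) ≤
      ‖∑ j : Fin k, Complex.exp (Complex.I * (θ j : ℂ))‖ := by
  have h1 : ∑ j : Fin k, Real.cos (θ j - ϑ)
      = (Complex.exp (-(ϑ:ℂ) * Complex.I) *
          ∑ j : Fin k, Complex.exp (Complex.I * (θ j : ℂ))).re := by
    rw [Finset.mul_sum]
    rw [Complex.re_sum]
    refine Finset.sum_congr rfl (fun j _ => ?_)
    rw [← Complex.exp_add]
    have e : -(ϑ:ℂ) * Complex.I + Complex.I * (θ j : ℂ) = ((θ j - ϑ : ℝ) : ℂ) * Complex.I := by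
      push_cast; ring
    rw [e, Complex.exp_ofReal_mul_I_re]
  rw [h1]
  refine le_trans (Complex.re_le_norm _) ?_
  rw [norm_mul]
  have : ‖Complex.exp (-(ϑ:ℂ) * Complex.I)‖ = 1 := by
    have e : -(ϑ:ℂ) * Complex.I = ((-ϑ : ℝ) : ℂ) * Complex.I := by push_cast; ring
    rw [e, Complex.norm_exp_ofReal_mul_I]
  rw [this, one_mul]

lemma key_step (k : ℕ) (ϑ : ℝ) (θ : Fin k → ℝ)
    (hθ : ∀ j, θ j ∈ Set.Icc (ϑ - π / 2) (ϑ + π / 2)) (c : ℝ) :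
    ‖∑ j : Fin k, Complex.exp (Complex.I * (((c : ℂ) + 2) * (θ j : ℂ)))‖ ≤
      ‖∑ j : Fin k, Complex.exp (Complex.I * ((c : ℂ) * (θ j : ℂ)))‖ +
        2 * ‖∑ j : Fin k, Complex.exp (Complex.I * (θ j : ℂ))‖ := by
  have hcos : ∀ j, 0 ≤ Real.cos (θ j - ϑ) := by
    intro j
    apply Real.cos_nonneg_of_mem_Icc
    have h := hθ j
    constructor
    · linarith [h.1]
    · linarith [h.2]
  have hid : ∀ j, Complex.exp (Complex.I * (((c : ℂ) + 2) * (θ j : ℂ))) =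
      2 * (Real.cos (θ j - ϑ) : ℂ) *
          Complex.exp ((((c + 1) * θ j + ϑ : ℝ) : ℂ) * Complex.I) -
        Complex.exp (2 * Complex.I * (ϑ : ℂ)) *
          Complex.exp (Complex.I * ((c : ℂ) * (θ j : ℂ))) := by
    intro j
    have h1 := exp_cos_aux ((((c + 1) * θ j + ϑ : ℝ) : ℂ) * Complex.I) ((θ j : ℂ) - (ϑ : ℂ))
    have e1 : (((c + 1) * θ j + ϑ : ℝ) : ℂ) * Complex.I + ((θ j : ℂ) - (ϑ : ℂ)) * Complex.I
        = Complex.I * (((c : ℂ) + 2) * (θ j : ℂ)) := by push_cast; ring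
    have e2 : (((c + 1) * θ j + ϑ : ℝ) : ℂ) * Complex.I - ((θ j : ℂ) - (ϑ : ℂ)) * Complex.I
        = 2 * Complex.I * (ϑ : ℂ) + Complex.I * ((c : ℂ) * (θ j : ℂ)) := by push_cast; ring
    rw [e1, e2] at h1
    rw [h1, Complex.exp_add]
    have e3 : ((θ j : ℂ) - (ϑ : ℂ)) = ((θ j - ϑ : ℝ) : ℂ) := by push_cast; ring
    rw [e3, ← Complex.ofReal_cos]
  rw [Finset.sum_congr rfl (fun j _ => hid j), Finset.sum_sub_distrib, ← Finset.mul_sum]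
  refine le_trans (norm_sub_le _ _) ?_
  have hB : ‖Complex.exp (2 * Complex.I * (ϑ : ℂ)) *
      ∑ j : Fin k, Complex.exp (Complex.I * ((c : ℂ) * (θ j : ℂ)))‖ =
      ‖∑ j : Fin k, Complex.exp (Complex.I * ((c : ℂ) * (θ j : ℂ)))‖ := by
    rw [norm_mul]
    have e : 2 * Complex.I * (ϑ : ℂ) = ((2 * ϑ : ℝ) : ℂ) * Complex.I := by push_cast; ring
    rw [e, Complex.norm_exp_ofReal_mul_I, one_mul]
  rw [hB]
  have hA : ‖∑ j : Fin k, 2 * (Real.cos (θ j - ϑ) : ℂ) *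
        Complex.exp ((((c + 1) * θ j + ϑ : ℝ) : ℂ) * Complex.I)‖
      ≤ 2 * ‖∑ j : Fin k, Complex.exp (Complex.I * (θ j : ℂ))‖ := by
    refine le_trans (norm_sum_le _ _) ?_
    have hterm : ∀ j : Fin k, ‖2 * (Real.cos (θ j - ϑ) : ℂ) *
          Complex.exp ((((c + 1) * θ j + ϑ : ℝ) : ℂ) * Complex.I)‖
        = 2 * Real.cos (θ j - ϑ) := by
      intro j
      rw [norm_mul, norm_mul, Complex.norm_exp_ofReal_mul_I, mul_one, Complex.norm_real, Real.norm_eq_abs,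
        abs_of_nonneg (hcos j)]
      simp
    rw [Finset.sum_congr rfl (fun j _ => hterm j), ← Finset.mul_sum]
    have := cos_sum_le k ϑ θ
    nlinarith [this]
  linarith

theorem stmt0 (n k : ℕ) (ϑ : ℝ) (θ : Fin k → ℝ)
    (hθ : ∀ j, θ j ∈ Set.Icc (ϑ - π / 2) (ϑ + π / 2)) :
    ‖∑ j : Fin k, Complex.exp (Complex.I * ((2 * (n : ℂ) + 1) * (θ j : ℂ)))‖ ≤
      (2 * (n : ℝ) + 1) * ‖∑ j : Fin k, Complex.exp (Complex.I * (θ j : ℂ))‖ := by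
  induction n with
  | zero =>
    simp
  | succ n ih =>
    have e : (2 * ((n + 1 : ℕ) : ℂ) + 1) = (((2 * (n:ℝ) + 1 : ℝ)) : ℂ) + 2 := by
      push_cast; ring
    have key := key_step k ϑ θ hθ (2 * (n:ℝ) + 1)
    have hL : (∑ j : Fin k, Complex.exp (Complex.I * ((2 * ((n + 1 : ℕ) : ℂ) + 1) * (θ j : ℂ))))
        = ∑ j : Fin k, Complex.exp (Complex.I * ((((2 * (n:ℝ) + 1 : ℝ) : ℂ) + 2) * (θ j : ℂ))) :=
      Finset.sum_congr rfl (fun j _ => by push_cast; ring_nf)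
    have hM : (∑ j : Fin k, Complex.exp (Complex.I * ((((2 * (n:ℝ) + 1 : ℝ) : ℂ)) * (θ j : ℂ))))
        = ∑ j : Fin k, Complex.exp (Complex.I * ((2 * (n : ℂ) + 1) * (θ j : ℂ))) :=
      Finset.sum_congr rfl (fun j _ => by push_cast; ring_nf)
    rw [hL]
    rw [hM] at key
    push_cast at key ⊢
    linarith
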